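/- Let A ∈ ℝ^{n×d} (n, d ≥ 1), λ > 0, q > 0, σ > 0, x* ∈ ℝ^d, and let Σ̂ = (1/n)AᵀA. Let x_PAR and x_ridge be as in Theorem 4.1 (global minimizers of the PAR-regularized and ridge-regularized least-squares objectives with the quadratic-approximating PAR Ψ_q and regularization strength λ). Suppose the ridge excess-risk bound (1/n)‖A(x_ridge − x*)‖² ≤ (λ/2)‖x*‖² + σ²·tr(Σ̂)/(2λn) holds. Then (1/n)‖A(x_PAR − x*)‖² ≤ λ(dq² + ‖x*‖²) + σ²·tr(Σ̂)/(λn). Moreover, if additionally ‖x*‖ + √d·q > 0, tr(Σ̂) > 0, and λ = σ·√(tr(Σ̂)/n) / (‖x*‖ + √d·q), then (1/n)‖A(x_PAR − x*)‖² ≤ 2σ(‖x*‖ + √d·q)·√(tr(Σ̂)/n). -/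

import Mathlib

/-- The piecewise-affine regularizer with quantization values `Q = {0, ±q, ±2q, …}`
that interpolates the quadratic `x²/2` at the grid points: with `k = ⌊|x|/q⌋`,
`Ψ_q(x) = (k + 1/2)·q·(|x| − kq) + k²q²/2`. -/
noncomputable def quadPAR (q : ℝ) (x : ℝ) : ℝ :=
  ((⌊|x| / q⌋₊ : ℝ) + 1 / 2) * q * (|x| - (⌊|x| / q⌋₊ : ℝ) * q) +
    (⌊|x| / q⌋₊ : ℝ) ^ 2 * q ^ 2 / 2

set_option maxHeartbeats 800000

lemma quadPAR_ge {q : ℝ} (hq : 0 < q) (x : ℝ) : x ^ 2 / 2 ≤ quadPAR q x := by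
  unfold quadPAR
  set k : ℝ := (⌊|x| / q⌋₊ : ℝ) with hk
  have hk0 : (0:ℝ) ≤ k := Nat.cast_nonneg _
  have hfl : k ≤ |x| / q := Nat.floor_le (by positivity)
  have h1 : k * q ≤ |x| := by
    have := mul_le_mul_of_nonneg_right hfl hq.le
    rwa [div_mul_cancel₀ _ hq.ne'] at this
  have h2 : |x| < (k + 1) * q := by
    have := Nat.lt_floor_add_one (|x| / q)
    have := mul_lt_mul_of_pos_right this hq
    rwa [div_mul_cancel₀ _ hq.ne'] at this
  have hx2 : x ^ 2 = |x| ^ 2 := (sq_abs x).symm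
  nlinarith [mul_nonneg (sub_nonneg.2 h1) (sub_nonneg.2 h2.le)]

lemma quadPAR_le {q : ℝ} (hq : 0 < q) (x : ℝ) : quadPAR q x ≤ x ^ 2 / 2 + q ^ 2 / 8 := by
  unfold quadPAR
  set k : ℝ := (⌊|x| / q⌋₊ : ℝ) with hk
  have hfl : k ≤ |x| / q := Nat.floor_le (by positivity)
  have h1 : k * q ≤ |x| := by
    have := mul_le_mul_of_nonneg_right hfl hq.le
    rwa [div_mul_cancel₀ _ hq.ne'] at this
  have hx2 : x ^ 2 = |x| ^ 2 := (sq_abs x).symm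
  nlinarith [sq_nonneg (|x| - k * q - q / 2)]

/-- Theorem 4.2, excess risk of the PAR-regularized solution, explicit:
given the classical ridge excess-risk bound, the PAR excess risk satisfies
`(1/n)‖A(x_PAR − x*)‖² ≤ λ(dq² + ‖x*‖²) + σ²·tr(Σ̂)/(λn)`, and with the optimal choice
of `λ` it is at most `2σ(‖x*‖ + √d·q)·√(tr(Σ̂)/n)`. Here `tr(Σ̂) = (1/n)∑_{i,j} A i j ²`
is the trace of the sample covariance `Σ̂ = (1/n)AᵀA`. -/
theorem par_excess_risk
    (n d : ℕ) (hn : 0 < n) (hd : 0 < d)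
    (A : Matrix (Fin n) (Fin d) ℝ) (b : Fin n → ℝ)
    (lam : ℝ) (hlam : 0 < lam) (q : ℝ) (hq : 0 < q)
    (σ : ℝ) (hσ : 0 < σ) (xstar : Fin d → ℝ)
    (FPAR Fridge : (Fin d → ℝ) → ℝ)
    (hFPAR : ∀ x, FPAR x =
      (1 / (2 * n)) * ∑ i, (A.mulVec x i - b i) ^ 2 + lam * ∑ i, quadPAR q (x i))
    (hFridge : ∀ x, Fridge x =
      (1 / (2 * n)) * ∑ i, (A.mulVec x i - b i) ^ 2 + (lam / 2) * ∑ i, (x i) ^ 2)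
    (xPAR : Fin d → ℝ) (hxPAR : ∀ y, FPAR xPAR ≤ FPAR y)
    (xridge : Fin d → ℝ) (hxridge : ∀ y, Fridge xridge ≤ Fridge y)
    (hridge : (1 / n) * ∑ i, (A.mulVec (xridge - xstar) i) ^ 2 ≤
      (lam / 2) * ∑ i, (xstar i) ^ 2 +
        σ ^ 2 * ((1 / n) * ∑ i, ∑ j, (A i j) ^ 2) / (2 * lam * n)) :
    (1 / n) * ∑ i, (A.mulVec (xPAR - xstar) i) ^ 2 ≤
      lam * ((d : ℝ) * q ^ 2 + ∑ i, (xstar i) ^ 2) +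
        σ ^ 2 * ((1 / n) * ∑ i, ∑ j, (A i j) ^ 2) / (lam * n) ∧
    (0 < Real.sqrt (∑ i, (xstar i) ^ 2) + Real.sqrt d * q →
      0 < (1 / n) * ∑ i, ∑ j, (A i j) ^ 2 →
      lam = σ * Real.sqrt (((1 / n) * ∑ i, ∑ j, (A i j) ^ 2) / n) /
        (Real.sqrt (∑ i, (xstar i) ^ 2) + Real.sqrt d * q) →
      (1 / n) * ∑ i, (A.mulVec (xPAR - xstar) i) ^ 2 ≤
        2 * σ * (Real.sqrt (∑ i, (xstar i) ^ 2) + Real.sqrt d * q) *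
          Real.sqrt (((1 / n) * ∑ i, ∑ j, (A i j) ^ 2) / n)) := by
  have hn' : (0:ℝ) < (n:ℝ) := by exact_mod_cast hn
  -- key strong-convexity-type bound
  have hDbound : (1 / (2 * (n:ℝ))) * ∑ i, (A.mulVec (xPAR - xridge) i) ^ 2 ≤
      lam * (d:ℝ) * q ^ 2 / 4 := by
    set z : Fin d → ℝ := fun i => (xPAR i + xridge i) / 2 with hzdef
    have hzmul : ∀ i, A.mulVec z i = (A.mulVec xPAR i + A.mulVec xridge i) / 2 := by
      intro i
      simp only [Matrix.mulVec, dotProduct, z]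
      rw [← Finset.sum_add_distrib, Finset.sum_div]
      exact Finset.sum_congr rfl fun j _ => by ring
    have hwm : ∀ i, A.mulVec (xPAR - xridge) i = A.mulVec xPAR i - A.mulVec xridge i := by
      intro i; rw [Matrix.mulVec_sub]; rfl
    have hmid1 : (∑ i, (A.mulVec z i - b i) ^ 2)
        + (1/4) * ∑ i, (A.mulVec (xPAR - xridge) i) ^ 2
        = (1/2) * ((∑ i, (A.mulVec xPAR i - b i) ^ 2) + ∑ i, (A.mulVec xridge i - b i) ^ 2) := by
      rw [Finset.mul_sum, ← Finset.sum_add_distrib, ← Finset.sum_add_distrib, Finset.mul_sum]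
      exact Finset.sum_congr rfl fun i _ => by rw [hzmul i, hwm i]; ring
    have hmid2 : (∑ i, (z i) ^ 2) + (1/4) * ∑ i, (xPAR i - xridge i) ^ 2
        = (1/2) * ((∑ i, (xPAR i) ^ 2) + ∑ i, (xridge i) ^ 2) := by
      rw [Finset.mul_sum, ← Finset.sum_add_distrib, ← Finset.sum_add_distrib, Finset.mul_sum]
      refine Finset.sum_congr rfl fun i _ => ?_
      simp only [z]; ring
    have hA1 : Fridge xridge ≤ Fridge z := hxridge z
    rw [hFridge, hFridge] at hA1
    have hB1 : FPAR xPAR ≤ FPAR xridge := hxPAR xridge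
    rw [hFPAR, hFPAR] at hB1
    have hge : (1/2) * ∑ i, (xPAR i) ^ 2 ≤ ∑ i, quadPAR q (xPAR i) := by
      rw [Finset.mul_sum]
      exact Finset.sum_le_sum fun i _ => by
        have := quadPAR_ge hq (xPAR i); linarith
    have hle : ∑ i, quadPAR q (xridge i) ≤ (1/2) * ∑ i, (xridge i) ^ 2 + (d:ℝ) * q ^ 2 / 8 := by
      have h1 : ∑ i, quadPAR q (xridge i) ≤ ∑ i : Fin d, ((xridge i) ^ 2 / 2 + q ^ 2 / 8) :=
        Finset.sum_le_sum fun i _ => quadPAR_le hq (xridge i)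
      have h2 : ∑ i : Fin d, ((xridge i) ^ 2 / 2 + q ^ 2 / 8)
          = (1/2) * ∑ i, (xridge i) ^ 2 + (d:ℝ) * q ^ 2 / 8 := by
        rw [Finset.sum_add_distrib, Finset.sum_const, Finset.card_univ, Fintype.card_fin,
          nsmul_eq_mul, Finset.mul_sum]
        congr 1
        · exact Finset.sum_congr rfl fun i _ => by ring
        · ring
      linarith
    set c : ℝ := 1 / (2 * (n:ℝ)) with hc
    set P := ∑ i, (A.mulVec xPAR i - b i) ^ 2 with hP
    set R := ∑ i, (A.mulVec xridge i - b i) ^ 2 with hR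
    set D := ∑ i, (A.mulVec (xPAR - xridge) i) ^ 2 with hD
    set Z := ∑ i, (A.mulVec z i - b i) ^ 2 with hZ
    set Zs := ∑ i, (z i) ^ 2 with hZs
    set Sp := ∑ i, (xPAR i) ^ 2 with hSp
    set Sr := ∑ i, (xridge i) ^ 2 with hSr
    set N := ∑ i, (xPAR i - xridge i) ^ 2 with hN
    set Gp := ∑ i, quadPAR q (xPAR i) with hGp
    set Gr := ∑ i, quadPAR q (xridge i) with hGr
    have hc0 : 0 < c := by rw [hc]; positivity
    have hNpos : (0:ℝ) ≤ N := by rw [hN]; positivity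
    have hZeq : Z = (1/2) * (P + R) - (1/4) * D := by linarith
    have hZseq : Zs = (1/2) * (Sp + Sr) - (1/4) * N := by linarith
    rw [hZeq, hZseq] at hA1
    have e3 : lam * ((1/2) * Sp) ≤ lam * Gp := mul_le_mul_of_nonneg_left hge hlam.le
    have e4 : lam * Gr ≤ lam * ((1/2) * Sr + (d:ℝ) * q ^ 2 / 8) :=
      mul_le_mul_of_nonneg_left hle hlam.le
    have e5 : 0 ≤ lam * N := mul_nonneg hlam.le hNpos
    linarith only [hA1, hB1, e3, e4, e5, hNpos, e5]
  -- split inequality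
  have hsplit : ∑ i, (A.mulVec (xPAR - xstar) i) ^ 2 ≤
      2 * ∑ i, (A.mulVec (xPAR - xridge) i) ^ 2
      + 2 * ∑ i, (A.mulVec (xridge - xstar) i) ^ 2 := by
    have hpt : ∀ i, A.mulVec (xPAR - xstar) i
        = A.mulVec (xPAR - xridge) i + A.mulVec (xridge - xstar) i := by
      intro i
      simp only [Matrix.mulVec_sub, Pi.sub_apply]
      ring
    calc ∑ i, (A.mulVec (xPAR - xstar) i) ^ 2
        ≤ ∑ i, (2 * (A.mulVec (xPAR - xridge) i) ^ 2
            + 2 * (A.mulVec (xridge - xstar) i) ^ 2) := by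
          refine Finset.sum_le_sum fun i _ => ?_
          rw [hpt i]
          nlinarith [sq_nonneg (A.mulVec (xPAR - xridge) i - A.mulVec (xridge - xstar) i)]
      _ = 2 * ∑ i, (A.mulVec (xPAR - xridge) i) ^ 2
            + 2 * ∑ i, (A.mulVec (xridge - xstar) i) ^ 2 := by
          rw [Finset.sum_add_distrib, Finset.mul_sum, Finset.mul_sum]
  have hDn : (1 / (n:ℝ)) * ∑ i, (A.mulVec (xPAR - xridge) i) ^ 2 ≤ lam * (d:ℝ) * q ^ 2 / 2 := by
    have h2c : (1:ℝ) / (n:ℝ) = 2 * (1 / (2 * (n:ℝ))) := by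
      field_simp
    rw [h2c]
    linarith only [hDbound]
  have main1 : (1 / (n:ℝ)) * ∑ i, (A.mulVec (xPAR - xstar) i) ^ 2 ≤
      lam * ((d : ℝ) * q ^ 2 + ∑ i, (xstar i) ^ 2) +
        σ ^ 2 * ((1 / (n:ℝ)) * ∑ i, ∑ j, (A i j) ^ 2) / (lam * (n:ℝ)) := by
    have h1 : (1 / (n:ℝ)) * ∑ i, (A.mulVec (xPAR - xstar) i) ^ 2
        ≤ (1 / (n:ℝ)) * (2 * ∑ i, (A.mulVec (xPAR - xridge) i) ^ 2
            + 2 * ∑ i, (A.mulVec (xridge - xstar) i) ^ 2) :=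
      mul_le_mul_of_nonneg_left hsplit (by positivity)
    have h1' : (1 / (n:ℝ)) * (2 * ∑ i, (A.mulVec (xPAR - xridge) i) ^ 2
            + 2 * ∑ i, (A.mulVec (xridge - xstar) i) ^ 2)
        = 2 * ((1 / (n:ℝ)) * ∑ i, (A.mulVec (xPAR - xridge) i) ^ 2)
          + 2 * ((1 / (n:ℝ)) * ∑ i, (A.mulVec (xridge - xstar) i) ^ 2) := by ring
    have hrhs : lam * ((d : ℝ) * q ^ 2 + ∑ i, (xstar i) ^ 2) +
          σ ^ 2 * ((1 / (n:ℝ)) * ∑ i, ∑ j, (A i j) ^ 2) / (lam * (n:ℝ))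
        = lam * (d:ℝ) * q ^ 2 + lam * ∑ i, (xstar i) ^ 2
          + 2 * (σ ^ 2 * ((1 / (n:ℝ)) * ∑ i, ∑ j, (A i j) ^ 2) / (2 * lam * (n:ℝ))) := by
      ring
    linarith only [h1, h1'.le, h1'.ge, hDn, hridge, hrhs.le, hrhs.ge]
  refine ⟨main1, fun hpos hT hlam_eq => ?_⟩
  set S := ∑ i, (xstar i) ^ 2 with hSdef
  set T := (1 / (n:ℝ)) * ∑ i, ∑ j, (A i j) ^ 2 with hTdef
  set R0 := Real.sqrt S with hR0def
  set sq := Real.sqrt (T / (n:ℝ)) with hsqdef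
  have hSnn : (0:ℝ) ≤ S := by rw [hSdef]; positivity
  have hTnn : (0:ℝ) ≤ T / (n:ℝ) := by positivity
  have hS : R0 ^ 2 = S := Real.sq_sqrt hSnn
  have hdq : Real.sqrt (d:ℝ) ^ 2 = (d:ℝ) := Real.sq_sqrt (by positivity)
  have hsq2 : sq ^ 2 = T / (n:ℝ) := Real.sq_sqrt hTnn
  have hlam' : lam * (R0 + Real.sqrt (d:ℝ) * q) = σ * sq := by
    rw [hlam_eq, div_mul_cancel₀ _ hpos.ne']
  have h51 : σ ^ 2 * (T / (n:ℝ)) = lam ^ 2 * (R0 + Real.sqrt (d:ℝ) * q) ^ 2 := by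
    calc σ ^ 2 * (T / (n:ℝ)) = σ ^ 2 * sq ^ 2 := by rw [hsq2]
      _ = (σ * sq) ^ 2 := by ring
      _ = (lam * (R0 + Real.sqrt (d:ℝ) * q)) ^ 2 := by rw [hlam']
      _ = lam ^ 2 * (R0 + Real.sqrt (d:ℝ) * q) ^ 2 := by ring
  have h5 : σ ^ 2 * T / (lam * (n:ℝ)) = lam * (R0 + Real.sqrt (d:ℝ) * q) ^ 2 := by
    have hstep : σ ^ 2 * T / (lam * (n:ℝ)) = (σ ^ 2 * (T / (n:ℝ))) / lam := by ring
    rw [hstep, h51]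
    field_simp
  have hle2 : lam * ((d:ℝ) * q ^ 2 + S) ≤ lam * (R0 + Real.sqrt (d:ℝ) * q) ^ 2 := by
    have hcross : 0 ≤ R0 * (Real.sqrt (d:ℝ) * q) :=
      mul_nonneg (Real.sqrt_nonneg S) (mul_nonneg (Real.sqrt_nonneg _) hq.le)
    have hsqd : (Real.sqrt (d:ℝ) * q) ^ 2 = (d:ℝ) * q ^ 2 := by rw [mul_pow, hdq]
    have hexp : (R0 + Real.sqrt (d:ℝ) * q) ^ 2
        = R0 ^ 2 + 2 * (R0 * (Real.sqrt (d:ℝ) * q)) + (Real.sqrt (d:ℝ) * q) ^ 2 := by ring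
    refine mul_le_mul_of_nonneg_left ?_ hlam.le
    rw [hexp, hS, hsqd]
    linarith only [hcross]
  have hfin : 2 * σ * (R0 + Real.sqrt (d:ℝ) * q) * sq
      = 2 * lam * (R0 + Real.sqrt (d:ℝ) * q) ^ 2 := by
    linear_combination (2 * (R0 + Real.sqrt (d:ℝ) * q)) * hlam'.symm
  linarith only [main1, h5.le, h5.ge, hle2, hfin.le, hfin.ge]
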